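/- If G is an oriented graph on n vertices with minimum semidegree δ⁰(G) ≥ ⌈2n/5⌉, then for every vertex u of G there exists a 3-cycle of G containing u. -/

import Mathlib

/-- An oriented graph: a digraph (relation) with no loops and no pair of
antiparallel edges. -/
def IsOrientedGraph {V : Type*} (E : V → V → Prop) : Prop :=
  ∀ x y, E x y → ¬ E y x

/-- The outdegree `d⁺(x)` of a vertex. -/
noncomputable def outDeg {V : Type*} (E : V → V → Prop) (x : V) : ℕ :=
  Nat.card {y // E x y}

/-- The indegree `d⁻(x)` of a vertex. -/
noncomputable def inDeg {V : Type*} (E : V → V → Prop) (x : V) : ℕ :=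
  Nat.card {y // E y x}

/-- The minimum semidegree `δ⁰(G) = min over x of min (d⁺(x), d⁻(x))`. -/
noncomputable def minSemidegree {V : Type*} (E : V → V → Prop) : ℕ :=
  sInf (Set.range fun x => min (outDeg E x) (inDeg E x))

/-- The minimum outdegree `δ⁺(G)`. -/
noncomputable def minOutdegree {V : Type*} (E : V → V → Prop) : ℕ :=
  sInf (Set.range fun x => outDeg E x)

/-- `G` contains a directed cycle of length `ℓ`: distinct vertices
`v₀, …, v_{ℓ-1}` (indexed cyclically) with all consecutive edges present. -/
def HasCycle {V : Type*} (E : V → V → Prop) (ℓ : ℕ) : Prop :=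
  ∃ v : ZMod ℓ → V, Function.Injective v ∧ ∀ i, E (v i) (v (i + 1))

/-- `G` contains a directed `ℓ`-cycle through the vertex `u`. -/
def HasCycleThrough {V : Type*} (E : V → V → Prop) (ℓ : ℕ) (u : V) : Prop :=
  ∃ v : ZMod ℓ → V, Function.Injective v ∧ (∀ i, E (v i) (v (i + 1))) ∧ ∃ i, v i = u

theorem triangle_through_every_vertex (V : Type*) [Fintype V] (E : V → V → Prop)
    (hG : IsOrientedGraph E)
    (hδ : ⌈(2 * (Fintype.card V : ℚ)) / 5⌉₊ ≤ minSemidegree E) :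
    ∀ u : V, HasCycleThrough E 3 u := by
  classical
  intro u
  by_contra hno
  have hne : ∀ a b : V, E a b → a ≠ b := fun a b h hab => hG a b h (hab ▸ h)
  -- if we can find the two other vertices of a triangle, we are done
  have tri : ∀ x y : V, E u x → E x y → E y u → False := by
    intro x y hux hxy hyu
    apply hno
    refine ⟨![u, x, y], ?_, ?_, ⟨0, rfl⟩⟩
    · intro i j hij
      fin_cases i <;> fin_cases j <;> simp_all <;>
        first
        | exact absurd rfl (hne _ _ hux)
        | exact absurd rfl (hne _ _ hxy)
        | exact absurd rfl (hne _ _ hyu)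
        | rfl
    · intro i
      fin_cases i <;> simpa using by first | exact hux | exact hxy | exact hyu
  -- counting argument
  set n := Fintype.card V with hn
  set d := minSemidegree E with hd
  have hout : ∀ x : V, outDeg E x = (Finset.univ.filter (fun y => E x y)).card := by
    intro x
    rw [outDeg, Nat.card_eq_fintype_card, Fintype.card_subtype]
  have hin : ∀ x : V, inDeg E x = (Finset.univ.filter (fun y => E y x)).card := by
    intro x
    rw [inDeg, Nat.card_eq_fintype_card, Fintype.card_subtype]
  have hdout : ∀ x : V, d ≤ outDeg E x :=
    fun x => le_trans (Nat.sInf_le ⟨x, rfl⟩) (min_le_left _ _)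
  have hdin : ∀ x : V, d ≤ inDeg E x :=
    fun x => le_trans (Nat.sInf_le ⟨x, rfl⟩) (min_le_right _ _)
  -- `2n ≤ 5d`
  have h2n : 2 * n ≤ 5 * d := by
    have h := Nat.ceil_le.mp hδ
    have h5 : (0:ℚ) < 5 := by norm_num
    rw [div_le_iff₀ h5] at h
    have : (2 * n : ℚ) ≤ (5 * d : ℚ) := by linarith
    exact_mod_cast this
  have hn1 : 1 ≤ n := Fintype.card_pos_iff.mpr ⟨u⟩
  set A : Finset V := Finset.univ.filter (fun y => E u y) with hA
  set B : Finset V := Finset.univ.filter (fun y => E y u) with hB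
  have hdA : d ≤ A.card := by rw [hA, ← hout]; exact hdout u
  have hdB : d ≤ B.card := by rw [hB, ← hin]; exact hdin u
  have huA : u ∉ A := by simp only [hA, Finset.mem_filter]; rintro ⟨-, h⟩; exact hG u u h h
  have hABdisj : Disjoint A B := by
    rw [Finset.disjoint_left]
    intro y hyA hyB
    simp only [hA, hB, Finset.mem_filter] at hyA hyB
    exact hG u y hyA.2 hyB.2
  have huB : u ∉ B := by simp only [hB, Finset.mem_filter]; rintro ⟨-, h⟩; exact hG u u h h
  set C : Finset V := insert u (A ∪ B) with hC
  have huAB : u ∉ A ∪ B := by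
    rw [Finset.mem_union]; push_neg; exact ⟨huA, huB⟩
  have hCcard : C.card = A.card + B.card + 1 := by
    rw [hC, Finset.card_insert_of_notMem huAB, Finset.card_union_of_disjoint hABdisj]
  set R : Finset V := Finset.univ \ C with hR
  have hRcard : R.card + (A.card + B.card + 1) = n := by
    rw [hR, ← hCcard]
    exact Finset.card_sdiff_add_card_eq_card (Finset.subset_univ C)
  -- out-neighbourhoods of vertices in `A` avoid `B` and `u`
  set g : V → ℕ := fun x => (A.filter (fun y => E x y)).card with hg
  have hNx : ∀ x ∈ A, d ≤ g x + R.card := by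
    intro x hxA
    have hEux : E u x := by simpa [hA] using hxA
    refine le_trans (le_trans (hdout x) (le_of_eq (hout x))) ?_
    refine le_trans (Finset.card_le_card
      (t := (A.filter (fun y => E x y)) ∪ R) ?_) (Finset.card_union_le _ _)
    intro y hy
    simp only [Finset.mem_filter, Finset.mem_univ, true_and] at hy
    by_cases hyA : y ∈ A
    · exact Finset.mem_union_left _ (by simp [Finset.mem_filter, hyA, hy])
    · refine Finset.mem_union_right _ ?_
      simp only [hR, hC, Finset.mem_sdiff, Finset.mem_univ, true_and, Finset.mem_insert,
        Finset.mem_union]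
      push_neg
      refine ⟨?_, hyA, ?_⟩
      · exact fun h => hG u x hEux (h ▸ hy)
      · simp only [hB, Finset.mem_filter, Finset.mem_univ, true_and]
        intro hEyu; exact tri x y hEux hy hEyu
  -- double counting edges within `A`
  set S : Finset (V × V) := (A ×ˢ A).filter (fun p => E p.1 p.2) with hS
  have hSsum : S.card = ∑ x ∈ A, g x := by
    rw [hS, Finset.card_filter, Finset.sum_product]
    exact Finset.sum_congr rfl fun x _ => (Finset.card_filter _ _).symm
  have hSsub : S ⊆ A.offDiag := by
    intro p hp
    simp only [hS, Finset.mem_filter, Finset.mem_product] at hp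
    exact Finset.mem_offDiag.mpr ⟨hp.1.1, hp.1.2, fun h => hG p.1 p.2 hp.2 (h ▸ hp.2)⟩
  have hSswap : S.image Prod.swap ⊆ A.offDiag := by
    intro p hp
    simp only [Finset.mem_image] at hp
    obtain ⟨q, hq, rfl⟩ := hp
    simp only [hS, Finset.mem_filter, Finset.mem_product] at hq
    refine Finset.mem_offDiag.mpr ⟨hq.1.2, hq.1.1, fun h => ?_⟩
    have h' : q.2 = q.1 := h
    exact hG q.1 q.1 (h' ▸ hq.2) (h' ▸ hq.2)
  have hSdisj : Disjoint S (S.image Prod.swap) := by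
    rw [Finset.disjoint_left]
    intro p hp hp'
    simp only [Finset.mem_image] at hp'
    obtain ⟨q, hq, hqp⟩ := hp'
    simp only [hS, Finset.mem_filter, Finset.mem_product] at hp hq
    exact hG _ _ hp.2 (by rw [← hqp]; exact hq.2)
  have h2S : 2 * S.card ≤ A.card * (A.card - 1) := by
    have h1 : (S ∪ S.image Prod.swap).card ≤ A.offDiag.card :=
      Finset.card_le_card (Finset.union_subset hSsub hSswap)
    rw [Finset.card_union_of_disjoint hSdisj,
      Finset.card_image_of_injective _ Prod.swap_injective, Finset.offDiag_card] at h1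
    have hms : A.card * (A.card - 1) = A.card * A.card - A.card := by
      rw [Nat.mul_sub, Nat.mul_one]
    omega
  have hAne : A.Nonempty := by
    rw [← Finset.card_pos]; omega
  -- pigeonhole: some vertex of `A` has few out-neighbours inside `A`
  have hpig : ∃ x ∈ A, 2 * g x ≤ A.card - 1 := by
    by_contra hcon
    push_neg at hcon
    have hlt : ∑ x ∈ A, (A.card - 1) < ∑ x ∈ A, 2 * g x := by
      apply Finset.sum_lt_sum_of_nonempty hAne
      intro x hx; exact hcon x hx
    rw [Finset.sum_const, smul_eq_mul, ← Finset.mul_sum, ← hSsum] at hlt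
    omega
  obtain ⟨x, hxA, hgx⟩ := hpig
  have h1 := hNx x hxA
  omega
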